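/- For any even cycle C_n (n ≥ 4 even), rc(C_n) = n/2 − 1. -/

import Mathlib

open SimpleGraph
open Fin.CommRing

/-- The cop's sequence of positions, given his initial vertex `c₀` and a
(history-dependent) strategy `F`, where `F n` determines the cop's `(n+1)`-st
position from the robber's positions `r 0, …, r n` seen so far. -/
def copSeq {V : Type*} (c₀ : V) (F : (n : ℕ) → (Fin (n + 1) → V) → V)
    (r : ℕ → V) : ℕ → V
  | 0 => c₀
  | n + 1 => F n (fun i : Fin (n + 1) => r i)

/-- The cop has a winning strategy in the cop and robber game with radius of
capture `k` on the graph `G`: the cop chooses a starting vertex and a strategy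
such that, against every legal play of the robber (at each step the robber
stays or moves to an adjacent vertex; his moves may depend on the whole
history), the cop's play is legal and at some point of the game the distance
between the two players is at most `k`. -/
def CopWinRC {V : Type*} (G : SimpleGraph V) (k : ℕ) : Prop :=
  ∃ (c₀ : V) (F : (n : ℕ) → (Fin (n + 1) → V) → V),
    ∀ r : ℕ → V,
      (∀ i, r (i + 1) = r i ∨ G.Adj (r i) (r (i + 1))) →
      ((∀ n, copSeq c₀ F r (n + 1) = copSeq c₀ F r n
            ∨ G.Adj (copSeq c₀ F r n) (copSeq c₀ F r (n + 1))) ∧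
        ∃ n, G.dist (copSeq c₀ F r n) (r n) ≤ k
           ∨ G.dist (copSeq c₀ F r (n + 1)) (r n) ≤ k)

/-- The radius capture number of `G`: the least `k` such that the cop wins
the cop and robber game with radius of capture `k`. -/
noncomputable def rcNum {V : Type*} (G : SimpleGraph V) : ℕ :=
  sInf {k | CopWinRC G k}

/-- Eccentricity of a vertex: the maximum distance to another vertex. -/
noncomputable def graphEcc {V : Type*} (G : SimpleGraph V) (v : V) : ℕ :=
  sSup (Set.range (G.dist v))

/-- Radius of a graph: the minimum eccentricity. -/
noncomputable def graphRad {V : Type*} (G : SimpleGraph V) : ℕ :=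
  sInf (Set.range (graphEcc G))

namespace RCAux
open SimpleGraph

lemma cycle_conn {n : ℕ} (hn : 1 ≤ n) : (cycleGraph n).Connected := by
  cases n with
  | zero => omega
  | succ m => exact cycleGraph_connected

lemma adj_succ {n : ℕ} [NeZero n] (hn : 2 ≤ n) (v : Fin n) :
    (cycleGraph n).Adj v (v + 1) := by
  rw [cycleGraph_adj']
  right
  simp [Fin.val_one', Nat.mod_eq_of_lt hn]

lemma adj_shift {n : ℕ} [NeZero n] {u v : Fin n} (h : (cycleGraph n).Adj u v) (t : Fin n) :
    (cycleGraph n).Adj (u + t) (v + t) := by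
  rw [cycleGraph_adj'] at h ⊢
  have h1 : u + t - (v + t) = u - v := by ring
  have h2 : v + t - (u + t) = v - u := by ring
  rw [h1, h2]; exact h

lemma dist_add_le {n : ℕ} [NeZero n] (hn : 2 ≤ n) (v : Fin n) (d : ℕ) :
    (cycleGraph n).dist v (v + (d : Fin n)) ≤ d := by
  induction d with
  | zero => simp
  | succ d ih =>
    have hadj : (cycleGraph n).Adj (v + (d : Fin n)) (v + (d : Fin n) + 1) := adj_succ hn _
    have h1 : (cycleGraph n).dist (v + (d : Fin n)) (v + ((d + 1 : ℕ) : Fin n)) ≤ 1 := by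
      have : v + ((d + 1 : ℕ) : Fin n) = v + (d : Fin n) + 1 := by push_cast; ring
      rw [this, dist_eq_one_iff_adj.mpr hadj]
    calc (cycleGraph n).dist v (v + ((d+1 : ℕ) : Fin n))
        ≤ (cycleGraph n).dist v (v + (d : Fin n)) +
          (cycleGraph n).dist (v + (d : Fin n)) (v + ((d+1 : ℕ) : Fin n)) :=
          (cycle_conn (by omega)).dist_triangle
      _ ≤ d + 1 := by omega

lemma dist_le_half {n : ℕ} [NeZero n] (hn : 2 ≤ n) (u v : Fin n) :
    (cycleGraph n).dist u v ≤ n / 2 := by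
  set d := (v - u).val with hd
  have hvu : v = u + (d : Fin n) := by
    rw [hd, Fin.cast_val_eq_self]; ring
  rcases le_or_gt d (n / 2) with hle | hlt
  · calc (cycleGraph n).dist u v ≤ d := by rw [hvu]; exact dist_add_le hn u d
      _ ≤ n / 2 := hle
  · set e := (u - v).val with he
    have huv : u = v + (e : Fin n) := by rw [he, Fin.cast_val_eq_self]; ring
    have hde : (d + e) % n = 0 := by
      have h0 : (v - u) + (u - v) = 0 := by ring
      have := congrArg Fin.val h0
      rwa [Fin.val_add, Fin.val_zero] at this
    have hdn : d < n := (v - u).isLt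
    have hen : e < n := (u - v).isLt
    have hd0 : d ≠ 0 := by omega
    have hsum : d + e = n := by
      rcases Nat.lt_or_ge (d + e) n with h | h
      · rw [Nat.mod_eq_of_lt h] at hde; omega
      · have hlt2 : d + e - n < n := by omega
        have h2 : (d + e) % n = d + e - n := by
          rw [Nat.mod_eq_sub_mod h, Nat.mod_eq_of_lt hlt2]
        omega
    have he2 : e ≤ n / 2 := by omega
    calc (cycleGraph n).dist u v = (cycleGraph n).dist v u := dist_comm ..
      _ ≤ e := by rw [huv]; exact dist_add_le hn v e
      _ ≤ n / 2 := he2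

lemma walk_winding {n : ℕ} [NeZero n] (hn : 2 ≤ n) {u v : Fin n}
    (p : (cycleGraph n).Walk u v) :
    ∃ s : ℤ, s.natAbs ≤ p.length ∧ ((s : Fin n)) = v - u := by
  induction p with
  | nil => exact ⟨0, by simp⟩
  | @cons a b c hadj p ih =>
    obtain ⟨s, hs, hcast⟩ := ih
    rw [cycleGraph_adj'] at hadj
    rcases hadj with h | h
    · have hab : a - b = (1 : Fin n) := by
        have := Fin.cast_val_eq_self (a - b)
        rw [h] at this
        rw [← this]; norm_cast
      refine ⟨s + (-1), ?_, ?_⟩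
      · simp only [SimpleGraph.Walk.length_cons]
        have := Int.natAbs_add_le s (-1)
        simpa using by omega
      · push_cast
        rw [hcast]
        linear_combination hab
    · have hba : b - a = (1 : Fin n) := by
        have := Fin.cast_val_eq_self (b - a)
        rw [h] at this
        rw [← this]; norm_cast
      refine ⟨s + 1, ?_, ?_⟩
      · simp only [SimpleGraph.Walk.length_cons]
        have := Int.natAbs_add_le s 1
        simpa using by omega
      · push_cast
        rw [hcast]
        linear_combination -hba

lemma dist_antipode_ge {h : ℕ} (hh : 1 ≤ h) [NeZero (2 * h)] (v : Fin (2 * h)) :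
    h ≤ (cycleGraph (2 * h)).dist v (v + ((h : ℕ) : Fin (2 * h))) := by
  have hconn : (cycleGraph (2*h)).Connected := by
    cases hn' : 2 * h with
    | zero => omega
    | succ m => exact cycleGraph_connected
  by_contra hlt
  push_neg at hlt
  obtain ⟨p, hp⟩ := (hconn.preconnected v (v + ((h : ℕ) : Fin (2*h)))).exists_walk_length_eq_dist
  obtain ⟨s, hs, hcast⟩ := walk_winding (by omega) p
  rw [hp] at hs
  have habs : s.natAbs < h := by omega
  have hcast2 : ((s : Fin (2*h))) = ((h : ℕ) : Fin (2*h)) := by rw [hcast]; ring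
  have hzero : ((s - (h : ℤ) : ℤ) : Fin (2*h)) = 0 := by push_cast; rw [hcast2]; push_cast; ring
  have hdvd : ((2*h : ℕ) : ℤ) ∣ (s - (h : ℤ)) := (CharP.intCast_eq_zero_iff (Fin (2*h)) (2*h) _).mp hzero
  obtain ⟨t, ht⟩ := hdvd
  have h1 : -(h : ℤ) < s := by omega
  have h2 : s < (h : ℤ) := by omega
  rcases lt_trichotomy t 0 with h3 | h3 | h3
  · have ht1 : t ≤ -1 := by omega
    have : ((2*h:ℕ) : ℤ) * t ≤ ((2*h:ℕ) : ℤ) * (-1) := mul_le_mul_of_nonneg_left ht1 (by positivity)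
    omega
  · rw [h3] at ht; omega
  · have ht1 : 1 ≤ t := by omega
    have : ((2*h:ℕ) : ℤ) * 1 ≤ ((2*h:ℕ) : ℤ) * t := mul_le_mul_of_nonneg_left ht1 (by positivity)
    omega

lemma dist_antipode_ge' {n h : ℕ} (hh : 1 ≤ h) (hn : n = 2 * h) [NeZero n] (v : Fin n) :
    h ≤ (cycleGraph n).dist v (v + ((h : ℕ) : Fin n)) := by
  subst hn; exact dist_antipode_ge hh v

lemma step_toward {n : ℕ} {u v : Fin n} {d : ℕ}
    (hd : (cycleGraph n).dist u v = d + 1) :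
    ∃ w, (cycleGraph n).Adj u w ∧ (cycleGraph n).dist w v ≤ d := by
  obtain ⟨p, hp⟩ := exists_walk_of_dist_ne_zero (G := cycleGraph n) (u := u) (v := v) (by omega)
  rw [hd] at hp
  cases p with
  | nil => simp at hp
  | cons hadj q =>
    refine ⟨_, hadj, ?_⟩
    have := dist_le q
    simp [SimpleGraph.Walk.length_cons] at hp
    omega

end RCAux

open Classical in
/-- The robber's mirroring sequence: start at the antipode of the cop and
keep mirroring the cop's moves whenever that is a legal move. -/
noncomputable def robSeq {n : ℕ} [NeZero n] (h : ℕ) (c₀ : Fin n)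
    (F : (i : ℕ) → (Fin (i + 1) → Fin n) → Fin n) : ℕ → Fin n
  | 0 => c₀ + ((h : ℕ) : Fin n)
  | i + 1 =>
    let c := F i (fun j : Fin (i + 1) => robSeq h c₀ F j)
    if c + ((h : ℕ) : Fin n) = robSeq h c₀ F i ∨
        (cycleGraph n).Adj (robSeq h c₀ F i) (c + ((h : ℕ) : Fin n))
    then c + ((h : ℕ) : Fin n) else robSeq h c₀ F i
  decreasing_by all_goals first | exact Fin.is_lt _ | exact Nat.lt_succ_self _

lemma robSeq_legal {n : ℕ} [NeZero n] (h : ℕ) (c₀ : Fin n)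
    (F : (i : ℕ) → (Fin (i + 1) → Fin n) → Fin n) (i : ℕ) :
    robSeq h c₀ F (i + 1) = robSeq h c₀ F i ∨
      (cycleGraph n).Adj (robSeq h c₀ F i) (robSeq h c₀ F (i + 1)) := by
  rw [robSeq]
  split
  · rename_i hc
    rcases hc with hc | hc
    · left; exact hc
    · right; exact hc
  · left; rfl

lemma robSeq_eq {n : ℕ} [NeZero n] (h : ℕ) (c₀ : Fin n)
    (F : (i : ℕ) → (Fin (i + 1) → Fin n) → Fin n)
    (hcop : ∀ m, copSeq c₀ F (robSeq h c₀ F) (m + 1) = copSeq c₀ F (robSeq h c₀ F) m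
            ∨ (cycleGraph n).Adj (copSeq c₀ F (robSeq h c₀ F) m)
                (copSeq c₀ F (robSeq h c₀ F) (m + 1))) :
    ∀ i, robSeq h c₀ F i = copSeq c₀ F (robSeq h c₀ F) i + ((h : ℕ) : Fin n) := by
  intro i
  induction i with
  | zero => rw [robSeq]; rfl
  | succ i ih =>
    have hc : copSeq c₀ F (robSeq h c₀ F) (i + 1)
        = F i (fun j : Fin (i + 1) => robSeq h c₀ F j) := rfl
    rw [robSeq]
    simp only [← hc]
    rcases hcop i with hq | hadj
    · rw [if_pos (Or.inl (by rw [hq, ← ih]))]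
    · rw [if_pos (Or.inr (by rw [ih]; exact RCAux.adj_shift hadj _))]

/-- For any even cycle `C_n` (`n ≥ 4` even), `rc(C_n) = n/2 - 1`. -/
theorem rcNum_cycleGraph_even (n : ℕ) (hn : 4 ≤ n) (heven : Even n) :
    rcNum (cycleGraph n) = n / 2 - 1 := by
  obtain ⟨h, hh⟩ := heven
  haveI : NeZero n := ⟨by omega⟩
  have hn2 : n = 2 * h := by omega
  have hh2 : 2 ≤ h := by omega
  have hhalf : n / 2 = h := by omega
  have hconn : (cycleGraph n).Connected := RCAux.cycle_conn (by omega)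
  -- the cop wins with radius h - 1
  have hwin : CopWinRC (cycleGraph n) (h - 1) := by
    have key : ∀ x : Fin n, ∃ w : Fin n,
        ((cycleGraph n).Adj 0 w ∨ w = 0) ∧
        ((cycleGraph n).dist 0 x ≤ h - 1 ∧ w = 0 ∨ (cycleGraph n).dist w x ≤ h - 1) := by
      intro x
      rcases le_or_gt ((cycleGraph n).dist 0 x) (h - 1) with hle | hlt
      · exact ⟨0, Or.inr rfl, Or.inl ⟨hle, rfl⟩⟩
      · have hle2 : (cycleGraph n).dist 0 x ≤ h := by
          have := RCAux.dist_le_half (n := n) (by omega) 0 x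
          omega
        have hd : (cycleGraph n).dist 0 x = (h - 1) + 1 := by omega
        obtain ⟨w, hadj, hw⟩ := RCAux.step_toward hd
        exact ⟨w, Or.inl hadj, Or.inr hw⟩
    choose g hg1 hg2 using key
    refine ⟨0, fun i hist => g (hist ⟨0, Nat.succ_pos i⟩), fun r hr => ?_⟩
    constructor
    · intro m
      cases m with
      | zero =>
        rcases hg1 (r 0) with hadj | hq
        · right; exact hadj
        · left; exact hq
      | succ m => left; rfl
    · refine ⟨0, ?_⟩
      rcases hg2 (r 0) with ⟨hle, _⟩ | hw
      · left; exact hle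
      · right; exact hw
  -- the cop does not win with any radius below h - 1
  have hlower : ∀ k, CopWinRC (cycleGraph n) k → h - 1 ≤ k := by
    intro k hk
    by_contra hlt
    push_neg at hlt
    obtain ⟨c₀, F, hF⟩ := hk
    obtain ⟨hcop, i, hcap⟩ := hF (robSeq h c₀ F) (robSeq_legal h c₀ F)
    have hrel := robSeq_eq h c₀ F hcop
    have hanti : ∀ c : Fin n, h ≤ (cycleGraph n).dist c (c + ((h : ℕ) : Fin n)) :=
      fun c => RCAux.dist_antipode_ge' (by omega) hn2 c
    rcases hcap with hcap | hcap
    · rw [hrel i] at hcap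
      have := hanti (copSeq c₀ F (robSeq h c₀ F) i)
      omega
    · rw [hrel i] at hcap
      have h1 : (cycleGraph n).dist (copSeq c₀ F (robSeq h c₀ F) i)
          (copSeq c₀ F (robSeq h c₀ F) (i + 1)) ≤ 1 := by
        rcases hcop i with hq | hadj
        · rw [hq, SimpleGraph.dist_self]; omega
        · rw [dist_eq_one_iff_adj.mpr hadj]
      have h2 := hconn.dist_triangle (u := copSeq c₀ F (robSeq h c₀ F) i)
        (v := copSeq c₀ F (robSeq h c₀ F) (i + 1))
        (w := copSeq c₀ F (robSeq h c₀ F) i + ((h : ℕ) : Fin n))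
      have := hanti (copSeq c₀ F (robSeq h c₀ F) i)
      omega
  rw [hhalf]
  exact le_antisymm (Nat.sInf_le hwin) (le_csInf ⟨_, hwin⟩ fun k hk => hlower k hk)
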